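/- For every real number t with 0 ≤ t < 1, one has ∑_{n=1}^∞ n^{n} · (t·e^{-t})^n / n! = t / (1-t). -/

import Mathlib

open Finset
open scoped ENNReal NNReal

/-- The alternating binomial sum `∑ (-1)^(m-k) C(m,k) k^p`. -/
def treeD (m p : ℕ) : ℤ :=
  ∑ k ∈ Finset.range (m + 1), (-1) ^ (m - k) * (m.choose k) * (k : ℤ) ^ p

lemma treeD_zero_of_pos (m : ℕ) (hm : m ≠ 0) : treeD m 0 = 0 := by
  unfold treeD
  rw [← Finset.sum_range_reflect]
  simp only [Nat.add_sub_cancel]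
  have h : ∀ k ∈ Finset.range (m+1),
      (-1:ℤ) ^ (m - (m - k)) * (m.choose (m-k)) * ((m - k : ℕ) : ℤ) ^ 0
      = (-1:ℤ)^k * (m.choose k) := by
    intro k hk
    rw [Finset.mem_range] at hk
    have hk' : k ≤ m := Nat.lt_succ_iff.mp hk
    rw [Nat.sub_sub_self hk', Nat.choose_symm hk', pow_zero, mul_one]
  rw [Finset.sum_congr rfl h, Int.alternating_sum_range_choose, if_neg hm]

lemma treeD_succ (m p : ℕ) (hp : p ≠ 0) :
    treeD (m+1) p = (m+1) * ∑ s ∈ Finset.range p, ((p-1).choose s : ℤ) * treeD m s := by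
  unfold treeD
  rw [Finset.sum_range_succ']
  have h0 : (-1:ℤ) ^ (m + 1 - 0) * ((m+1).choose 0) * ((0:ℕ) : ℤ) ^ p = 0 := by
    simp [zero_pow hp]
  rw [h0, add_zero]
  have h : ∀ i ∈ Finset.range (m+1),
      (-1:ℤ) ^ (m + 1 - (i+1)) * ((m+1).choose (i+1)) * ((i+1 : ℕ) : ℤ) ^ p
      = ∑ s ∈ Finset.range p,
          (m+1 : ℤ) * ((p-1).choose s) * ((-1)^(m-i) * (m.choose i) * (i:ℤ)^s) := by
    intro i hi
    have hms : m + 1 - (i+1) = m - i := by omega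
    have hpow : ((i+1 : ℕ) : ℤ) ^ p = ((i+1 : ℕ) : ℤ) ^ (p-1) * ((i+1:ℕ) : ℤ) := by
      rw [← pow_succ]
      congr 1
      omega
    have hbin : ((i+1 : ℕ) : ℤ) ^ (p-1)
        = ∑ s ∈ Finset.range p, (i:ℤ)^s * ((p-1).choose s) := by
      have := add_pow (i:ℤ) 1 (p-1)
      simp only [one_pow, mul_one] at this
      rw [show ((i+1:ℕ):ℤ) = (i:ℤ) + 1 by push_cast; ring, this,
        show p - 1 + 1 = p by omega]
    have hch : ((m+1).choose (i+1) : ℤ) * ((i+1 : ℕ) : ℤ)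
        = (m+1 : ℤ) * (m.choose i) := by
      have h' : (m+1) * m.choose i = (m+1).choose (i+1) * (i+1) :=
        Nat.add_one_mul_choose_eq m i
      exact_mod_cast h'.symm
    rw [hms, hpow, hbin, Finset.sum_mul, Finset.mul_sum]
    refine Finset.sum_congr rfl fun s _ => ?_
    linear_combination ((-1:ℤ)^(m-i) * (i:ℤ)^s * (((p:ℕ)-1).choose s : ℤ)) * hch
  rw [Finset.sum_congr rfl h, Finset.sum_comm, Finset.mul_sum]
  refine Finset.sum_congr rfl fun s _ => ?_
  rw [Finset.mul_sum, Finset.mul_sum]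
  exact Finset.sum_congr rfl fun i _ => by ring

lemma treeD_eq (m : ℕ) : (∀ p, p < m → treeD m p = 0) ∧ treeD m m = m.factorial := by
  induction m with
  | zero => exact ⟨fun p hp => absurd hp (Nat.not_lt_zero p), by simp [treeD]⟩
  | succ m ih =>
    constructor
    · intro p hp
      rcases Nat.eq_zero_or_pos p with h0 | h1
      · subst h0; exact treeD_zero_of_pos (m+1) (Nat.succ_ne_zero m)
      · rw [treeD_succ m p (Nat.pos_iff_ne_zero.mp h1)]
        have : ∀ s ∈ Finset.range p, ((p-1).choose s : ℤ) * treeD m s = 0 := by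
          intro s hs
          rw [Finset.mem_range] at hs
          rw [ih.1 s (by omega), mul_zero]
        rw [Finset.sum_congr rfl this, Finset.sum_const_zero, mul_zero]
    · rw [treeD_succ m (m+1) (Nat.succ_ne_zero m)]
      rw [show m + 1 - 1 = m from rfl]
      rw [Finset.sum_range_succ]
      have : ∀ s ∈ Finset.range m, (m.choose s : ℤ) * treeD m s = 0 := by
        intro s hs
        rw [Finset.mem_range] at hs
        rw [ih.1 s hs, mul_zero]
      rw [Finset.sum_congr rfl this, Finset.sum_const_zero, zero_add,
        Nat.choose_self, ih.2]
      push_cast [Nat.factorial_succ]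
      ring

lemma key_real (m : ℕ) :
    ∑ kl ∈ Finset.HasAntidiagonal.antidiagonal m, (-1:ℝ)^kl.2 * (m.choose kl.1) * (kl.1:ℝ)^m
      = m.factorial := by
  have hz : ∑ kl ∈ Finset.HasAntidiagonal.antidiagonal m, (-1:ℤ)^kl.2 * (m.choose kl.1) * (kl.1:ℤ)^m
      = m.factorial := by
    rw [Finset.Nat.sum_antidiagonal_eq_sum_range_succ_mk]
    exact (treeD_eq m).2
  exact_mod_cast hz

noncomputable def treec : ℕ → ℝ := fun n => if n = 0 then 0 else (n:ℝ)^n / n.factorial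

lemma treec_nonneg (n : ℕ) : 0 ≤ treec n := by
  unfold treec; split <;> positivity

lemma treec_le_exp (n : ℕ) : treec n ≤ Real.exp 1 ^ n := by
  unfold treec
  split
  · positivity
  · rw [Real.exp_one_pow]
    have hs := Real.summable_pow_div_factorial (n : ℝ)
    have hle : ((n:ℝ)^n / n.factorial) ≤ ∑' k, (n:ℝ)^k / k.factorial :=
      Summable.le_tsum hs n (fun j _ => by positivity)
    have hexp : Real.exp (n : ℝ) = ∑' k, (n:ℝ)^k / k.factorial := by
      rw [Real.exp_eq_exp_ℝ, NormedSpace.exp_eq_tsum_div]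
    linarith

lemma tree_small (t : ℝ) (h0 : 0 < t) (h1 : t < 8⁻¹) :
    ∑' n : ℕ, treec n * (t * Real.exp (-t))^n = t / (1 - t) := by
  set f : ℕ × ℕ → ℝ :=
    fun p => treec p.1 * t ^ p.1 * ((-((p.1 : ℝ) * t)) ^ p.2 / p.2.factorial) with hfdef
  -- rows
  have hrow : ∀ n : ℕ, HasSum (fun j => f (n, j)) (treec n * (t * Real.exp (-t)) ^ n) := by
    intro n
    have h := NormedSpace.expSeries_div_hasSum_exp (-((n:ℝ) * t))
    have h2 := h.mul_left (treec n * t ^ n)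
    have hv : treec n * t ^ n * NormedSpace.exp (-((n:ℝ) * t))
        = treec n * (t * Real.exp (-t)) ^ n := by
      rw [← Real.exp_eq_exp_ℝ]
      have : -((n:ℝ) * t) = (n : ℝ) * (-t) := by ring
      rw [this, Real.exp_nat_mul, mul_pow]
      ring
    rw [hv] at h2
    exact h2
  -- abs rows
  have habsrow : ∀ n : ℕ, HasSum (fun j => |f (n, j)|)
      (treec n * t ^ n * Real.exp ((n:ℝ) * t)) := by
    intro n
    have h := NormedSpace.expSeries_div_hasSum_exp ((n:ℝ) * t)
    have h2 := h.mul_left (treec n * t ^ n)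
    rw [← Real.exp_eq_exp_ℝ] at h2
    refine h2.congr_fun fun j => ?_
    have e2 : f (n, j) = (-1)^j * (treec n * t ^ n * (((n:ℝ) * t) ^ j / j.factorial)) := by
      show treec n * t ^ n * ((-((n:ℝ) * t)) ^ j / j.factorial) = _
      rw [neg_pow]; ring
    have hX : (0:ℝ) ≤ treec n * t ^ n * (((n:ℝ) * t) ^ j / j.factorial) :=
      mul_nonneg (mul_nonneg (treec_nonneg n) (pow_nonneg h0.le n)) (by positivity)
    rw [e2, abs_mul, abs_pow, abs_neg, abs_one, one_pow, one_mul, abs_of_nonneg hX]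
  -- geometric bound
  have hexplt : Real.exp 1 < 2.7182818286 := Real.exp_one_lt_d9
  have hrq : (0:ℝ) ≤ Real.exp 1 * (t * Real.exp t) := by positivity
  have hrq1 : Real.exp 1 * (t * Real.exp t) < 1 := by
    have h8 : Real.exp t < Real.exp 1 := Real.exp_lt_exp.mpr (by linarith)
    have hE : 0 < Real.exp t := Real.exp_pos t
    have hE1 : 0 < Real.exp 1 := Real.exp_pos 1
    have hA : t * Real.exp t < 8⁻¹ * Real.exp 1 := by nlinarith
    have hB : Real.exp 1 * (t * Real.exp t) < Real.exp 1 * (8⁻¹ * Real.exp 1) :=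
      mul_lt_mul_of_pos_left hA hE1
    nlinarith
  have habs : Summable fun p : ℕ × ℕ => |f p| := by
    refine (summable_prod_of_nonneg (fun p => abs_nonneg _)).2 ⟨fun n => (habsrow n).summable, ?_⟩
    refine Summable.of_nonneg_of_le (fun n => tsum_nonneg fun j => abs_nonneg _)
      (fun n => ?_) (summable_geometric_of_lt_one hrq hrq1)
    rw [(habsrow n).tsum_eq, Real.exp_nat_mul t n]
    calc treec n * t ^ n * Real.exp t ^ n
        = treec n * (t ^ n * Real.exp t ^ n) := by ring
      _ ≤ Real.exp 1 ^ n * (t ^ n * Real.exp t ^ n) :=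
          mul_le_mul_of_nonneg_right (treec_le_exp n) (by positivity)
      _ = (Real.exp 1 * (t * Real.exp t)) ^ n := by ring
  have hf : Summable f := summable_abs_iff.mp habs
  -- two evaluations of the double sum
  have hEq1 : ∑' p : ℕ × ℕ, f p = ∑' n : ℕ, treec n * (t * Real.exp (-t)) ^ n := by
    rw [Summable.tsum_prod hf]
    exact tsum_congr fun n => (hrow n).tsum_eq
  have hsig : Summable (f ∘ Finset.HasAntidiagonal.sigmaAntidiagonalEquivProd) :=
    Finset.HasAntidiagonal.sigmaAntidiagonalEquivProd.summable_iff.mpr hf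
  have hEq2 : ∑' p : ℕ × ℕ, f p = ∑' m : ℕ, ∑ kl ∈ Finset.HasAntidiagonal.antidiagonal m, f kl := by
    rw [← Finset.HasAntidiagonal.sigmaAntidiagonalEquivProd.tsum_eq f]
    have hmain :
        ∑' x : Σ n : ℕ, {p : ℕ × ℕ // p ∈ Finset.HasAntidiagonal.antidiagonal n}, f x.2
          = ∑' (b : ℕ) (c : {p : ℕ × ℕ // p ∈ Finset.HasAntidiagonal.antidiagonal b}), f c :=
      Summable.tsum_sigma' (fun n => (hasSum_fintype _).summable) hsig
    exact hmain.trans (tsum_congr fun m => Finset.tsum_subtype _ _)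
  -- evaluate inner sums
  have hinner : ∀ m : ℕ, ∑ kl ∈ Finset.HasAntidiagonal.antidiagonal m, f kl
      = if m = 0 then 0 else t ^ m := by
    intro m
    rcases Nat.eq_zero_or_pos m with rfl | hm
    · simp [hfdef, treec]
    have hm0 : m ≠ 0 := hm.ne'
    rw [if_neg hm0]
    have hterm : ∀ kl ∈ Finset.HasAntidiagonal.antidiagonal m,
        f kl = t ^ m / m.factorial * ((-1:ℝ)^kl.2 * (m.choose kl.1) * (kl.1:ℝ)^m) := by
      rintro ⟨n, j⟩ hkl
      rw [Finset.HasAntidiagonal.mem_antidiagonal] at hkl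
      rcases Nat.eq_zero_or_pos n with rfl | hn
      · simp [hfdef, treec, hm0]
      have hn0 : n ≠ 0 := hn.ne'
      have hnm : n ≤ m := by omega
      have hj : j = m - n := by omega
      have hch : (m.choose n : ℝ) * n.factorial * j.factorial = m.factorial := by
        subst hj
        exact_mod_cast Nat.choose_mul_factorial_mul_factorial hnm
      simp only [hfdef, treec, if_neg hn0]
      have hneg : (-((n:ℝ) * t)) ^ j = (-1:ℝ)^j * ((n:ℝ)^j * t^j) := by
        rw [neg_pow, mul_pow]
      rw [hneg]
      have hnf : (n.factorial : ℝ) ≠ 0 := Nat.cast_ne_zero.mpr n.factorial_ne_zero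
      have hjf : (j.factorial : ℝ) ≠ 0 := Nat.cast_ne_zero.mpr j.factorial_ne_zero
      have hmf : (m.factorial : ℝ) ≠ 0 := Nat.cast_ne_zero.mpr m.factorial_ne_zero
      have hforall : (n:ℝ)^n * ((n:ℝ)^j) = (n:ℝ)^m := by
        rw [← pow_add, ← hkl]
      have htm : t^n * t^j = t^m := by rw [← pow_add, ← hkl]
      rw [div_mul_eq_mul_div, div_mul_div_comm, div_mul_eq_mul_div,
        div_eq_div_iff (mul_ne_zero hnf hjf) hmf]
      calc (n:ℝ)^n * t^n * ((-1:ℝ)^j * ((n:ℝ)^j * t^j)) * (m.factorial : ℝ)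
          = ((-1:ℝ)^j * ((n:ℝ)^n * (n:ℝ)^j) * (t^n * t^j)) * (m.factorial : ℝ) := by ring
        _ = ((-1:ℝ)^j * (n:ℝ)^m * t^m) * (m.factorial : ℝ) := by rw [hforall, htm]
        _ = t ^ m * ((-1:ℝ)^j * (m.choose n) * (n:ℝ)^m) * ((n.factorial :ℝ) * (j.factorial : ℝ)) := by
            rw [← hch]; ring
    rw [Finset.sum_congr rfl hterm, ← Finset.mul_sum, key_real m]
    field_simp
  -- sum the geometric series
  have ht1' : t < 1 := by linarith
  have hgsum : ∑' m : ℕ, (if m = 0 then 0 else t ^ m) = t / (1 - t) := by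
    have hsummable : Summable (fun m : ℕ => if m = 0 then 0 else t ^ m) := by
      refine Summable.of_nonneg_of_le (fun m => ?_) (fun m => ?_)
        (summable_geometric_of_lt_one h0.le ht1')
      · split <;> positivity
      · split
        · positivity
        · exact le_refl _
    rw [Summable.tsum_eq_zero_add hsummable]
    have hsimp : ∀ m : ℕ, (if m + 1 = 0 then (0:ℝ) else t ^ (m+1)) = t * t ^ m := by
      intro m; rw [if_neg (Nat.succ_ne_zero m), pow_succ]; ring
    rw [tsum_congr hsimp, tsum_mul_left, tsum_geometric_of_lt_one h0.le ht1',
      if_pos rfl, zero_add, div_eq_mul_inv]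
  rw [← hEq1, hEq2, tsum_congr hinner, hgsum]

noncomputable def treeP : FormalMultilinearSeries ℝ ℝ ℝ :=
  FormalMultilinearSeries.ofScalars ℝ treec

lemma treeP_radius : (Real.toNNReal (Real.exp 1)⁻¹ : ℝ≥0∞) ≤ treeP.radius := by
  apply FormalMultilinearSeries.le_radius_of_bound _ 1
  intro n
  rw [show treeP n = FormalMultilinearSeries.ofScalars ℝ treec n from rfl,
    FormalMultilinearSeries.ofScalars_norm]
  have h1 : ‖treec n‖ = treec n := Real.norm_of_nonneg (treec_nonneg n)
  have h2 : ((Real.toNNReal (Real.exp 1)⁻¹ : ℝ≥0) : ℝ) = (Real.exp 1)⁻¹ :=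
    Real.coe_toNNReal _ (by positivity)
  rw [h1, h2]
  have h3 : treec n * ((Real.exp 1)⁻¹) ^ n ≤ Real.exp 1 ^ n * ((Real.exp 1)⁻¹) ^ n :=
    mul_le_mul_of_nonneg_right (treec_le_exp n) (by positivity)
  have h4 : Real.exp 1 ^ n * ((Real.exp 1)⁻¹) ^ n = 1 := by
    rw [← mul_pow, mul_inv_cancel₀ (Real.exp_ne_zero 1), one_pow]
  linarith

lemma treeP_radius_pos : 0 < treeP.radius := by
  refine lt_of_lt_of_le ?_ treeP_radius
  rw [ENNReal.coe_pos]
  exact Real.toNNReal_pos.mpr (by positivity)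

lemma mem_ball_treeP {x : ℝ} (hx : |x| < (Real.exp 1)⁻¹) :
    x ∈ Metric.eball (0:ℝ) treeP.radius := by
  rw [Metric.mem_eball, edist_zero_right, enorm_eq_nnnorm]
  refine lt_of_lt_of_le ?_ treeP_radius
  rw [ENNReal.coe_lt_coe, ← NNReal.coe_lt_coe, coe_nnnorm,
    Real.coe_toNNReal _ (by positivity : (0:ℝ) ≤ (Real.exp 1)⁻¹), Real.norm_eq_abs]
  exact hx

lemma treeP_hasSum {x : ℝ} (hx : |x| < (Real.exp 1)⁻¹) :
    HasSum (fun n => treec n * x ^ n) (treeP.sum x) := by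
  have h := treeP.hasSum (mem_ball_treeP hx)
  refine h.congr_fun fun n => ?_
  rw [show treeP n = FormalMultilinearSeries.ofScalars ℝ treec n from rfl,
    FormalMultilinearSeries.ofScalars_apply_eq, smul_eq_mul]

lemma abs_te_lt (t : ℝ) (ht : t ∈ Set.Ioo (-8⁻¹ : ℝ) 1) :
    |t * Real.exp (-t)| < (Real.exp 1)⁻¹ := by
  obtain ⟨hl, hr⟩ := ht
  have hE : 0 < Real.exp (-t) := Real.exp_pos _
  rcases le_or_gt 0 t with h | h
  · rw [abs_of_nonneg (by positivity)]
    have h1 : t < Real.exp (t - 1) := by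
      have := Real.add_one_lt_exp (x := t - 1) (by intro hc; nlinarith)
      linarith
    calc t * Real.exp (-t) < Real.exp (t - 1) * Real.exp (-t) :=
          mul_lt_mul_of_pos_right h1 hE
      _ = (Real.exp 1)⁻¹ := by rw [← Real.exp_add, ← Real.exp_neg]; ring_nf
  · rw [abs_of_nonpos (by nlinarith), neg_mul_eq_neg_mul]
    have h2 : -t < 8⁻¹ := by linarith
    have h3 : Real.exp (-t) < Real.exp 1 := Real.exp_lt_exp.mpr (by linarith)
    have hexplt : Real.exp 1 < 2.7182818286 := Real.exp_one_lt_d9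
    have hE1 : 0 < Real.exp 1 := Real.exp_pos 1
    have h4 : -t * Real.exp (-t) < 8⁻¹ * Real.exp 1 := by nlinarith
    have h5 : 8⁻¹ * Real.exp 1 < (Real.exp 1)⁻¹ := by
      have hid : (Real.exp 1)⁻¹ = 1 / Real.exp 1 := inv_eq_one_div _
      rw [hid, lt_div_iff₀ hE1]
      nlinarith
    linarith

lemma G_analytic :
    AnalyticOnNhd ℝ (fun t => treeP.sum (t * Real.exp (-t))) (Set.Ioo (-8⁻¹:ℝ) 1) := by
  intro z hz
  have h1 : AnalyticAt ℝ treeP.sum (z * Real.exp (-z)) :=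
    (treeP.hasFPowerSeriesOnBall treeP_radius_pos).analyticOnNhd _
      (by simpa using mem_ball_treeP (abs_te_lt z hz))
  have h2 : AnalyticAt ℝ (fun t : ℝ => t * Real.exp (-t)) z :=
    (analyticAt_id).mul (analyticAt_rexp.comp (analyticAt_id.neg))
  exact AnalyticAt.comp_of_eq (f := fun t : ℝ => t * Real.exp (-t)) h1 h2 rfl

lemma R_analytic :
    AnalyticOnNhd ℝ (fun t : ℝ => t / (1 - t)) (Set.Ioo (-8⁻¹:ℝ) 1) := by
  intro z hz
  exact (analyticAt_id).div (analyticAt_const.sub analyticAt_id) (by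
    have := hz.2; intro hc; simp only [Set.mem_Ioo] at *; nlinarith)

lemma G_eq_R : Set.EqOn (fun t => treeP.sum (t * Real.exp (-t)))
    (fun t : ℝ => t / (1 - t)) (Set.Ioo (-8⁻¹:ℝ) 1) := by
  apply G_analytic.eqOn_of_preconnected_of_eventuallyEq R_analytic isPreconnected_Ioo
    (z₀ := 16⁻¹) (by norm_num)
  have hmem : Set.Ioo (0:ℝ) 8⁻¹ ∈ nhds (16⁻¹:ℝ) := Ioo_mem_nhds (by norm_num) (by norm_num)
  refine Filter.eventually_of_mem hmem fun t ht => ?_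
  have hx : |t * Real.exp (-t)| < (Real.exp 1)⁻¹ :=
    abs_te_lt t ⟨by linarith [ht.1], by linarith [ht.2]⟩
  have hts := tree_small t ht.1 ht.2
  show treeP.sum (t * Real.exp (-t)) = t / (1 - t)
  rw [← (treeP_hasSum hx).tsum_eq]
  exact hts

/-- The identity `∑_{n=1}^∞ n^{n} (t e^{-t})^n / n! = t/(1-t)` for `0 ≤ t < 1`. -/
theorem tree_function_identity' (t : ℝ) (ht0 : 0 ≤ t) (ht1 : t < 1) :
    ∑' n : ℕ, ((n : ℝ) + 1) ^ (n + 1) * (t * Real.exp (-t)) ^ (n + 1)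
        / (Nat.factorial (n + 1) : ℝ) = t / (1 - t) := by
  have htU : t ∈ Set.Ioo (-8⁻¹ : ℝ) 1 := ⟨by linarith, ht1⟩
  have hx : |t * Real.exp (-t)| < (Real.exp 1)⁻¹ := abs_te_lt t htU
  have hsum := treeP_hasSum hx
  have h0 : ∑' n : ℕ, treec n * (t * Real.exp (-t)) ^ n
      = treeP.sum (t * Real.exp (-t)) := hsum.tsum_eq
  have hshift : ∑' n : ℕ, treec n * (t * Real.exp (-t)) ^ n
      = ∑' n : ℕ, treec (n+1) * (t * Real.exp (-t)) ^ (n+1) := by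
    rw [Summable.tsum_eq_zero_add hsum.summable]
    simp [treec]
  have hterm : ∀ n : ℕ, treec (n+1) * (t * Real.exp (-t)) ^ (n+1)
      = ((n : ℝ) + 1) ^ (n + 1) * (t * Real.exp (-t)) ^ (n + 1)
        / (Nat.factorial (n + 1) : ℝ) := by
    intro n
    rw [show treec (n+1) = ((n+1:ℕ):ℝ)^(n+1) / (n+1).factorial from if_neg (Nat.succ_ne_zero n)]
    push_cast
    ring
  calc ∑' n : ℕ, ((n : ℝ) + 1) ^ (n + 1) * (t * Real.exp (-t)) ^ (n + 1)
        / (Nat.factorial (n + 1) : ℝ)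
      = ∑' n : ℕ, treec (n+1) * (t * Real.exp (-t)) ^ (n+1) :=
        tsum_congr fun n => (hterm n).symm
    _ = treeP.sum (t * Real.exp (-t)) := by rw [← hshift, h0]
    _ = t / (1 - t) := G_eq_R htU
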